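/- Let f ∈ ℚ[u, z] be a polynomial in two variables, and let m be a natural number. Then the coefficient of r^m in the polynomial f(zr, ur+2) + f(zr, ur−2) − 2 f(zr, ur) (viewed as a polynomial in r with coefficients in ℚ[u,z]) equals ∑_{k ≥ m+2, k ≡ m (mod 2)} 2^{1+k−m} ∑_{p+j=k} C(p, m−j) · u^{m−j} z^j · c_{p,j}, where c_{p,j} is the coefficient of u^p z^j in f(z, u), and C(p, m−j) = 0 when m − j < 0 or m − j > p. -/

import Mathlib

open Finset

section Aux

-- generic: coefficient of (C a * X + C b)^p
lemma coeff_CaX_add_Cb_pow {R : Type*} [CommRing R] (a b : R) (p e : ℕ) :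
    (((Polynomial.C a) * Polynomial.X + Polynomial.C b) ^ p).coeff e
      = (p.choose e : R) * a ^ e * b ^ (p - e) := by
  rw [add_pow, Polynomial.finset_sum_coeff]
  have h : ∀ i ∈ Finset.range (p + 1),
      ((Polynomial.C a * Polynomial.X) ^ i * Polynomial.C b ^ (p - i)
        * (p.choose i : Polynomial R)).coeff e
        = if e = i then (p.choose e : R) * a ^ e * b ^ (p - e) else 0 := by
    intro i _
    have : (Polynomial.C a * Polynomial.X) ^ i * Polynomial.C b ^ (p - i)
        * (p.choose i : Polynomial R)
        = Polynomial.C ((p.choose i : R) * a ^ i * b ^ (p - i)) * Polynomial.X ^ i := by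
      simp only [mul_pow, ← Polynomial.C_pow, ← Polynomial.C_eq_natCast, map_mul]
      ring
    rw [this, Polynomial.coeff_C_mul, Polynomial.coeff_X_pow]
    split_ifs with hh
    · subst hh; simp
    · simp
  rw [Finset.sum_congr rfl h, Finset.sum_ite_eq (Finset.range (p + 1)) e]
  split_ifs with he
  · rfl
  · have : p < e := by simpa using (by simpa using he : ¬ e < p + 1)
    rw [Nat.choose_eq_zero_of_lt this]
    simp

end Aux

noncomputable section
namespace CoeffExtract

open MvPolynomial Polynomial

abbrev R2 := MvPolynomial (Fin 2) ℚ
abbrev Rout := MvPolynomial ℕ ℚ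

def g (p e : ℕ) : ℚ := 2 ^ (p - e) + (-2) ^ (p - e) - 2 * 0 ^ (p - e)

lemma g_eq (p e : ℕ) :
    g p e = if e + 2 ≤ p ∧ Even (p - e) then 2 ^ (1 + p - e) else 0 := by
  unfold g
  by_cases h0 : p - e = 0
  · rw [h0, if_neg (by omega)]
    norm_num
  by_cases h2 : Even (p - e)
  · have hle : e + 2 ≤ p := by
      rcases h2 with ⟨t, ht⟩; omega
    rw [h2.neg_pow, if_pos ⟨hle, h2⟩, zero_pow h0]
    have h1 : 1 + p - e = (p - e) + 1 := by omega
    rw [h1, pow_succ]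
    ring
  · rw [((Nat.not_even_iff_odd).mp h2).neg_pow, zero_pow h0,
      if_neg (by tauto)]
    ring

lemma coeff_B (p e : ℕ) :
    ((Polynomial.C (MvPolynomial.X 0 : Rout) * Polynomial.X + 2) ^ p
      + (Polynomial.C (MvPolynomial.X 0 : Rout) * Polynomial.X - 2) ^ p
      - 2 * (Polynomial.C (MvPolynomial.X 0 : Rout) * Polynomial.X) ^ p).coeff e
    = MvPolynomial.C ((p.choose e : ℚ) * g p e) * MvPolynomial.X 0 ^ e := by
  have h2 : (2 : Polynomial Rout) = Polynomial.C (MvPolynomial.C 2) := by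
    rw [map_ofNat, map_ofNat]
  have hm : (Polynomial.C (MvPolynomial.X 0 : Rout) * Polynomial.X) ^ p
      = (Polynomial.C (MvPolynomial.X 0 : Rout) * Polynomial.X
          + Polynomial.C (0 : Rout)) ^ p := by simp
  rw [hm, h2, sub_eq_add_neg _ (Polynomial.C (MvPolynomial.C 2 : Rout)), ← map_neg,
    Polynomial.coeff_sub, Polynomial.coeff_add, Polynomial.coeff_C_mul,
    coeff_CaX_add_Cb_pow, coeff_CaX_add_Cb_pow, coeff_CaX_add_Cb_pow]
  unfold g
  simp only [map_add, map_sub, map_mul, map_pow, map_ofNat, map_neg, map_zero,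
    map_natCast]
  ring

lemma coeff_mono (c : ℚ) (j p m : ℕ) :
    ((Polynomial.C (MvPolynomial.C c) * (Polynomial.C (MvPolynomial.X 1 : Rout) * Polynomial.X) ^ j
        * (Polynomial.C (MvPolynomial.X 0 : Rout) * Polynomial.X + 2) ^ p
      + Polynomial.C (MvPolynomial.C c) * (Polynomial.C (MvPolynomial.X 1 : Rout) * Polynomial.X) ^ j
        * (Polynomial.C (MvPolynomial.X 0 : Rout) * Polynomial.X - 2) ^ p
      - 2 * (Polynomial.C (MvPolynomial.C c) * (Polynomial.C (MvPolynomial.X 1 : Rout) * Polynomial.X) ^ j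
        * (Polynomial.C (MvPolynomial.X 0 : Rout) * Polynomial.X) ^ p)).coeff m)
    = if j ≤ m ∧ m + 2 ≤ p + j ∧ Even (p + j - m) then
        MvPolynomial.C ((2 : ℚ) ^ (1 + (p + j) - m) * (p.choose (m - j) : ℚ) * c)
          * MvPolynomial.X 0 ^ (m - j) * MvPolynomial.X 1 ^ j
      else 0 := by
  have hfactor :
      (Polynomial.C (MvPolynomial.C c) * (Polynomial.C (MvPolynomial.X 1 : Rout) * Polynomial.X) ^ j
        * (Polynomial.C (MvPolynomial.X 0 : Rout) * Polynomial.X + 2) ^ p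
      + Polynomial.C (MvPolynomial.C c) * (Polynomial.C (MvPolynomial.X 1 : Rout) * Polynomial.X) ^ j
        * (Polynomial.C (MvPolynomial.X 0 : Rout) * Polynomial.X - 2) ^ p
      - 2 * (Polynomial.C (MvPolynomial.C c) * (Polynomial.C (MvPolynomial.X 1 : Rout) * Polynomial.X) ^ j
        * (Polynomial.C (MvPolynomial.X 0 : Rout) * Polynomial.X) ^ p))
      = Polynomial.C (MvPolynomial.C c * MvPolynomial.X 1 ^ j)
        * (((Polynomial.C (MvPolynomial.X 0 : Rout) * Polynomial.X + 2) ^ p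
          + (Polynomial.C (MvPolynomial.X 0 : Rout) * Polynomial.X - 2) ^ p
          - 2 * (Polynomial.C (MvPolynomial.X 0 : Rout) * Polynomial.X) ^ p) * Polynomial.X ^ j) := by
    simp only [mul_pow, ← Polynomial.C_pow, map_mul]
    ring
  rw [hfactor, Polynomial.coeff_C_mul, Polynomial.coeff_mul_X_pow', coeff_B, g_eq]
  by_cases hj : j ≤ m
  · rw [if_pos hj]
    by_cases hc : m - j + 2 ≤ p ∧ Even (p - (m - j))
    · have hc' : j ≤ m ∧ m + 2 ≤ p + j ∧ Even (p + j - m) := by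
        rw [Nat.even_iff] at hc ⊢
        omega
      rw [if_pos hc, if_pos hc']
      have he : 1 + p - (m - j) = 1 + (p + j) - m := by omega
      rw [he]
      simp only [map_mul]
      ring
    · have hc' : ¬ (j ≤ m ∧ m + 2 ≤ p + j ∧ Even (p + j - m)) := by
        rw [Nat.even_iff] at hc ⊢
        omega
      rw [if_neg hc, if_neg hc']
      simp
  · rw [if_neg hj, if_neg (by tauto)]
    simp

def T (f : R2) (m : ℕ) (d : Fin 2 →₀ ℕ) : Rout :=
  if d 0 ≤ m ∧ m + 2 ≤ d 1 + d 0 ∧ Even (d 1 + d 0 - m) then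
    MvPolynomial.C ((2 : ℚ) ^ (1 + (d 1 + d 0) - m) * ((d 1).choose (m - d 0) : ℚ)
        * MvPolynomial.coeff d f)
      * MvPolynomial.X 0 ^ (m - d 0) * MvPolynomial.X 1 ^ (d 0)
  else 0

lemma lhs_eq (f : R2) (m : ℕ) :
    Polynomial.coeff
        (MvPolynomial.aeval
            ![Polynomial.C (MvPolynomial.X 1) * Polynomial.X,
              Polynomial.C (MvPolynomial.X 0) * Polynomial.X + 2] f
          + MvPolynomial.aeval
            ![Polynomial.C (MvPolynomial.X 1) * Polynomial.X,
              Polynomial.C (MvPolynomial.X 0) * Polynomial.X - 2] f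
          - 2 * MvPolynomial.aeval
            ![Polynomial.C (MvPolynomial.X 1) * Polynomial.X,
              Polynomial.C (MvPolynomial.X 0) * Polynomial.X] f) m
      = ∑ d ∈ f.support, T f m d := by
  have halg : ∀ c : ℚ, algebraMap ℚ (Polynomial Rout) c = Polynomial.C (MvPolynomial.C c) := by
    intro c
    rw [Polynomial.algebraMap_apply, MvPolynomial.algebraMap_eq]
  have hprod : ∀ (v : Fin 2 → Polynomial Rout) (d : Fin 2 →₀ ℕ),
      (d.prod fun i n => v i ^ n) = v 0 ^ d 0 * v 1 ^ d 1 := by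
    intro v d
    rw [Finsupp.prod_fintype _ _ (fun i => pow_zero _), Fin.prod_univ_two]
  conv_lhs => rw [MvPolynomial.as_sum f]
  simp only [map_sum, Finset.mul_sum]
  rw [← Finset.sum_add_distrib, ← Finset.sum_sub_distrib, Polynomial.finset_sum_coeff]
  refine Finset.sum_congr rfl fun d _ => ?_
  unfold T
  rw [← coeff_mono (MvPolynomial.coeff d f) (d 0) (d 1) m]
  refine congrArg (fun q => Polynomial.coeff q m) ?_
  simp only [MvPolynomial.aeval_monomial, hprod, Matrix.cons_val_zero,
    Matrix.cons_val_one, Matrix.head_cons, halg]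
  ring

lemma finsupp_fin2 (d : Fin 2 →₀ ℕ) :
    Finsupp.single (0 : Fin 2) (d 0) + Finsupp.single 1 (d 1) = d := by
  ext i
  fin_cases i <;> simp [Finsupp.single_apply]

lemma coeff_swap (f : R2) (p j : ℕ) :
    MvPolynomial.coeff (Finsupp.single (0 : Fin 2) p + Finsupp.single (1 : Fin 2) j)
        (MvPolynomial.aeval ![MvPolynomial.X 1, MvPolynomial.X 0] f)
      = MvPolynomial.coeff (Finsupp.single (0 : Fin 2) j + Finsupp.single 1 p) f := by
  have hv : ![(MvPolynomial.X 1 : R2), MvPolynomial.X 0]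
      = MvPolynomial.X ∘ (![1, 0] : Fin 2 → Fin 2) := by
    funext i
    fin_cases i <;> rfl
  have hswap : (MvPolynomial.aeval ![MvPolynomial.X 1, MvPolynomial.X 0] f : R2)
      = MvPolynomial.rename (![1, 0] : Fin 2 → Fin 2) f := by
    rw [hv, MvPolynomial.rename_eq_aeval]
  rw [hswap]
  have hinj : Function.Injective (![1, 0] : Fin 2 → Fin 2) := by decide
  have h := MvPolynomial.coeff_rename_mapDomain (![1, 0] : Fin 2 → Fin 2) hinj f
    (Finsupp.single 0 j + Finsupp.single 1 p)
  rw [Finsupp.mapDomain_add, Finsupp.mapDomain_single, Finsupp.mapDomain_single] at h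
  have h01 : (![1, 0] : Fin 2 → Fin 2) 0 = 1 := rfl
  have h10 : (![1, 0] : Fin 2 → Fin 2) 1 = 0 := rfl
  rw [h01, h10, add_comm] at h
  exact h

def Fterm (f : R2) (m : ℕ) (pj : ℕ × ℕ) : Rout :=
  if pj.2 ≤ m ∧ m + 2 ≤ pj.1 + pj.2 ∧ Even (pj.1 + pj.2 - m) then
    MvPolynomial.C ((2 : ℚ) ^ (1 + (pj.1 + pj.2) - m) * (pj.1.choose (m - pj.2) : ℚ)
        * MvPolynomial.coeff (Finsupp.single (0 : Fin 2) pj.2 + Finsupp.single 1 pj.1) f)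
      * MvPolynomial.X 0 ^ (m - pj.2) * MvPolynomial.X 1 ^ pj.2
  else 0

lemma T_eq_F (f : R2) (m : ℕ) (d : Fin 2 →₀ ℕ) :
    T f m d = Fterm f m (d 1, d 0) := by
  unfold T Fterm
  rw [finsupp_fin2 d]

lemma deg_bound {f : R2} {d : Fin 2 →₀ ℕ} (hd : d ∈ f.support) :
    d 0 + d 1 ≤ f.totalDegree := by
  have h := MvPolynomial.le_totalDegree hd
  rwa [Finsupp.sum_fintype _ _ (fun i => rfl), Fin.sum_univ_two] at h

lemma rhs_eq (f : R2) (m : ℕ) :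
    (∑ k ∈ Finset.range (f.totalDegree + 1),
        if m + 2 ≤ k ∧ Even (k - m) then
          ∑ pj ∈ Finset.HasAntidiagonal.antidiagonal k,
            if pj.2 ≤ m then
              MvPolynomial.C
                  ((2 : ℚ) ^ (1 + k - m) * (pj.1.choose (m - pj.2) : ℚ) *
                    MvPolynomial.coeff
                      (Finsupp.single (0 : Fin 2) pj.1 +
                        Finsupp.single (1 : Fin 2) pj.2)
                      (MvPolynomial.aeval
                        ![MvPolynomial.X 1, MvPolynomial.X 0] f))
                * MvPolynomial.X 0 ^ (m - pj.2) * MvPolynomial.X 1 ^ pj.2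
            else 0
        else 0)
    = ∑ d ∈ f.support, T f m d := by
  have step1 : ∀ k : ℕ,
      (if m + 2 ≤ k ∧ Even (k - m) then
          ∑ pj ∈ Finset.HasAntidiagonal.antidiagonal k,
            if pj.2 ≤ m then
              MvPolynomial.C
                  ((2 : ℚ) ^ (1 + k - m) * (pj.1.choose (m - pj.2) : ℚ) *
                    MvPolynomial.coeff
                      (Finsupp.single (0 : Fin 2) pj.1 +
                        Finsupp.single (1 : Fin 2) pj.2)
                      (MvPolynomial.aeval
                        ![MvPolynomial.X 1, MvPolynomial.X 0] f))
                * MvPolynomial.X 0 ^ (m - pj.2) * MvPolynomial.X 1 ^ pj.2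
            else 0
        else 0)
      = ∑ pj ∈ Finset.HasAntidiagonal.antidiagonal k, Fterm f m pj := by
    intro k
    by_cases hk : m + 2 ≤ k ∧ Even (k - m)
    · rw [if_pos hk]
      refine Finset.sum_congr rfl fun pj hpj => ?_
      have hsum : pj.1 + pj.2 = k := Finset.HasAntidiagonal.mem_antidiagonal.mp hpj
      subst hsum
      unfold Fterm
      by_cases hj : pj.2 ≤ m
      · rw [if_pos hj, if_pos ⟨hj, hk⟩, coeff_swap]
      · rw [if_neg hj, if_neg (by tauto)]
    · rw [if_neg hk]
      symm
      refine Finset.sum_eq_zero fun pj hpj => ?_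
      have hsum : pj.1 + pj.2 = k := Finset.HasAntidiagonal.mem_antidiagonal.mp hpj
      unfold Fterm
      rw [if_neg (by rw [hsum]; tauto)]
  rw [Finset.sum_congr rfl fun k _ => step1 k]
  have hdisj : Set.PairwiseDisjoint
      (↑(Finset.range (f.totalDegree + 1))) (Finset.HasAntidiagonal.antidiagonal : ℕ → Finset (ℕ × ℕ)) := by
    intro a _ b _ hab
    refine Finset.disjoint_left.mpr fun pj h1 h2 => hab ?_
    rw [← Finset.HasAntidiagonal.mem_antidiagonal.mp h1, ← Finset.HasAntidiagonal.mem_antidiagonal.mp h2]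
  rw [← Finset.sum_biUnion hdisj]
  symm
  calc ∑ d ∈ f.support, T f m d
      = ∑ d ∈ f.support, Fterm f m (d 1, d 0) :=
        Finset.sum_congr rfl fun d _ => T_eq_F f m d
    _ = ∑ pj ∈ f.support.image (fun d => (d 1, d 0)), Fterm f m pj := by
        refine (Finset.sum_image ?_).symm
        intro x _ y _ h
        have h1 : x 1 = y 1 := congrArg Prod.fst h
        have h0 : x 0 = y 0 := congrArg Prod.snd h
        rw [← finsupp_fin2 x, ← finsupp_fin2 y, h0, h1]
    _ = ∑ pj ∈ (Finset.range (f.totalDegree + 1)).biUnion Finset.HasAntidiagonal.antidiagonal,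
          Fterm f m pj := by
        refine Finset.sum_subset ?_ ?_
        · intro pj hpj
          rcases Finset.mem_image.mp hpj with ⟨d, hd, rfl⟩
          refine Finset.mem_biUnion.mpr ⟨d 1 + d 0, Finset.mem_range.mpr ?_, Finset.HasAntidiagonal.mem_antidiagonal.mpr rfl⟩
          have := deg_bound hd
          omega
        · intro pj _ hnot
          have hc : MvPolynomial.coeff
              (Finsupp.single (0 : Fin 2) pj.2 + Finsupp.single 1 pj.1) f = 0 := by
            by_contra hc
            apply hnot
            refine Finset.mem_image.mpr
              ⟨Finsupp.single (0 : Fin 2) pj.2 + Finsupp.single 1 pj.1,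
                MvPolynomial.mem_support_iff.mpr hc, ?_⟩
            simp [Finsupp.single_apply]
          unfold Fterm
          rw [hc]
          split_ifs <;> simp

end CoeffExtract

end

/-- Coefficient extraction identity from the proof of Theorem 3.4:
for a polynomial `f ∈ ℚ[u,z]` (variable `0` = first slot, variable `1` = second
slot), the coefficient of `r^m` in `f(zr, ur+2) + f(zr, ur−2) − 2 f(zr, ur)`
equals
`∑_{k ≥ m+2, k ≡ m (2)} 2^{1+k−m} ∑_{p+j=k} C(p, m−j) u^{m−j} z^j c_{p,j}`,
where `c_{p,j}` is the coefficient of `u^p z^j` in `f(z,u)`, and terms with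
`j > m` vanish.  Here `u = X 0` and `z = X 1` in the output ring `ℚ[u,z]`,
and the sum over `k` is truncated at the total degree of `f`, beyond which
all coefficients `c_{p,j}` with `p + j = k` vanish. -/
theorem coeff_extraction_shifted_maps (f : MvPolynomial (Fin 2) ℚ) (m : ℕ) :
    (Polynomial.coeff
        (MvPolynomial.aeval
            ![Polynomial.C (MvPolynomial.X 1) * Polynomial.X,
              Polynomial.C (MvPolynomial.X 0) * Polynomial.X + 2] f
          + MvPolynomial.aeval
            ![Polynomial.C (MvPolynomial.X 1) * Polynomial.X,
              Polynomial.C (MvPolynomial.X 0) * Polynomial.X - 2] f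
          - 2 * MvPolynomial.aeval
            ![Polynomial.C (MvPolynomial.X 1) * Polynomial.X,
              Polynomial.C (MvPolynomial.X 0) * Polynomial.X] f) m) =
      ∑ k ∈ Finset.range (f.totalDegree + 1),
        if m + 2 ≤ k ∧ Even (k - m) then
          ∑ pj ∈ Finset.HasAntidiagonal.antidiagonal k,
            if pj.2 ≤ m then
              MvPolynomial.C
                  ((2 : ℚ) ^ (1 + k - m) * (pj.1.choose (m - pj.2) : ℚ) *
                    MvPolynomial.coeff
                      (Finsupp.single (0 : Fin 2) pj.1 +
                        Finsupp.single (1 : Fin 2) pj.2)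
                      (MvPolynomial.aeval
                        ![MvPolynomial.X 1, MvPolynomial.X 0] f))
                * MvPolynomial.X 0 ^ (m - pj.2) * MvPolynomial.X 1 ^ pj.2
            else 0
        else 0 :=
  (CoeffExtract.lhs_eq f m).trans (CoeffExtract.rhs_eq f m).symm
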